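/- Let D : [0,∞) → ℝ be a bounded continuous function. For a real number λ, the following are equivalent: (i) λ > β⁺(D), where β⁺(D) is the upper Bohl exponent of D; (ii) the shifted equation x' = (D(t) − λ)·x admits an exponential dichotomy of stable type on [0,∞), i.e., there exist constants K ≥ 1 and α > 0 such that exp(∫_s^t (D(τ) − λ) dτ) ≤ K·exp(−α·(t − s)) for all t ≥ s ≥ 0. -/

import Mathlib

open Filter Set

/-- Transition operator of the scalar linear equation `x' = D t * x`. -/
noncomputable def Phi (D : ℝ → ℝ) (t s : ℝ) : ℝ :=
  Real.exp (∫ τ in s..t, D τ)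

/-- Average of `D` over the interval from `q.1` to `q.2`. -/
noncomputable def bohlAvg (D : ℝ → ℝ) (q : ℝ × ℝ) : ℝ :=
  (q.2 - q.1)⁻¹ * ∫ τ in q.1..q.2, D τ

/-- The filter describing `t - s → +∞` with `t > s ≥ 0` for pairs `q = (s, t)`. -/
def bohlFilter : Filter (ℝ × ℝ) :=
  (Filter.atTop.comap fun q : ℝ × ℝ => q.2 - q.1) ⊓
    Filter.principal {q : ℝ × ℝ | 0 ≤ q.1 ∧ q.1 < q.2}

/-- Upper Bohl exponent of `D`. -/
noncomputable def bohlUpper (D : ℝ → ℝ) : ℝ :=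
  Filter.limsup (bohlAvg D) bohlFilter

/-- Lower Bohl exponent of `D`. -/
noncomputable def bohlLower (D : ℝ → ℝ) : ℝ :=
  Filter.liminf (bohlAvg D) bohlFilter

lemma bohlFilter_mem_iff {P : Set (ℝ × ℝ)} :
    P ∈ bohlFilter ↔ ∃ T : ℝ, ∀ q : ℝ × ℝ, 0 ≤ q.1 → q.1 < q.2 → T ≤ q.2 - q.1 → q ∈ P := by
  rw [bohlFilter, Filter.mem_inf_principal, Filter.mem_comap]
  constructor
  · rintro ⟨B, hB, hsub⟩
    obtain ⟨T, hT⟩ := mem_atTop_sets.mp hB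
    exact ⟨T, fun q h0 hlt hT' => hsub (hT _ hT') ⟨h0, hlt⟩⟩
  · rintro ⟨T, hT⟩
    exact ⟨Set.Ici T, Ici_mem_atTop T, fun q hq hq' => hT q hq'.1 hq'.2 hq⟩

lemma bohlTendsto : Filter.Tendsto (fun n : ℝ => ((0:ℝ), n)) Filter.atTop bohlFilter := by
  rw [bohlFilter]
  refine Filter.tendsto_inf.mpr ⟨?_, ?_⟩
  · rw [Filter.tendsto_comap_iff]
    refine Filter.tendsto_id.congr' (Filter.Eventually.of_forall fun x => ?_)
    simp
  · rw [Filter.tendsto_principal]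
    filter_upwards [Filter.eventually_gt_atTop (0:ℝ)] with n hn
    exact ⟨le_refl 0, hn⟩

instance : bohlFilter.NeBot := Filter.neBot_of_le bohlTendsto

lemma bohlS_mem : {q : ℝ × ℝ | 0 ≤ q.1 ∧ q.1 < q.2} ∈ bohlFilter := by
  rw [bohlFilter]; exact Filter.mem_inf_of_right (Filter.mem_principal_self _)

lemma avg_bound {D : ℝ → ℝ} {M : ℝ} (hM : ∀ t, 0 ≤ t → |D t| ≤ M) {s t : ℝ}
    (h0 : 0 ≤ s) (hst : s < t) : |bohlAvg D (s, t)| ≤ M := by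
  have ht : (0:ℝ) < t - s := sub_pos.mpr hst
  have hI : |∫ τ in s..t, D τ| ≤ M * |t - s| := by
    rw [← Real.norm_eq_abs]
    apply intervalIntegral.norm_integral_le_of_norm_le_const
    intro x hx
    rw [Set.uIoc_of_le hst.le] at hx
    rw [Real.norm_eq_abs]
    exact hM x (h0.trans hx.1.le)
  rw [abs_of_pos ht] at hI
  rw [bohlAvg, abs_mul, abs_inv, abs_of_pos ht]
  calc (t - s)⁻¹ * |∫ τ in s..t, D τ| ≤ (t - s)⁻¹ * (M * (t - s)) := by
        exact mul_le_mul_of_nonneg_left hI (by positivity)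
    _ = M := by field_simp

lemma integral_shift {D : ℝ → ℝ} (hD_cont : ContinuousOn D (Set.Ici 0)) (lam : ℝ)
    {s t : ℝ} (h0 : 0 ≤ s) (hst : s ≤ t) :
    ∫ τ in s..t, (D τ - lam) = (∫ τ in s..t, D τ) - lam * (t - s) := by
  have hI : IntervalIntegrable D MeasureTheory.volume s t := by
    apply ContinuousOn.intervalIntegrable
    apply hD_cont.mono
    rw [Set.uIcc_of_le hst]
    exact fun x hx => h0.trans hx.1
  rw [intervalIntegral.integral_sub hI (intervalIntegrable_const),
    intervalIntegral.integral_const, smul_eq_mul]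
  ring

/-- Characterization of the spectral gap `(β⁺(D), +∞)`: `λ > β⁺(D)` iff the shifted
equation `x' = (D t - λ) x` admits an exponential dichotomy of stable type on `[0,∞)`. -/
theorem spectral_gap_stable_characterization (D : ℝ → ℝ)
    (hD_cont : ContinuousOn D (Set.Ici 0)) (hD_bdd : ∃ M, ∀ t, 0 ≤ t → |D t| ≤ M)
    (lam : ℝ) :
    bohlUpper D < lam ↔
      ∃ K α : ℝ, 1 ≤ K ∧ 0 < α ∧ ∀ s t, 0 ≤ s → s ≤ t →
        Real.exp (∫ τ in s..t, (D τ - lam)) ≤ K * Real.exp (-α * (t - s)) := by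
  obtain ⟨M, hM⟩ := hD_bdd
  have hM0 : 0 ≤ M := (abs_nonneg _).trans (hM 0 le_rfl)
  have hbd_le : ∀ᶠ q in bohlFilter, bohlAvg D q ≤ M := by
    filter_upwards [bohlS_mem] with q hq
    exact (abs_le.mp (avg_bound hM hq.1 hq.2)).2
  have hbd_ge : ∀ᶠ q in bohlFilter, -M ≤ bohlAvg D q := by
    filter_upwards [bohlS_mem] with q hq
    exact (abs_le.mp (avg_bound hM hq.1 hq.2)).1
  constructor
  · intro hlt
    set α : ℝ := (lam - bohlUpper D) / 2 with hα_def
    have hα : 0 < α := by simp only [hα_def]; linarith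
    have hev : ∀ᶠ q in bohlFilter, bohlAvg D q < lam - α := by
      apply Filter.eventually_lt_of_limsup_lt
      · have hbu : bohlUpper D = Filter.limsup (bohlAvg D) bohlFilter := rfl
        simp only [hα_def]
        linarith [hlt, hbu.symm.le, hbu.le]
      · exact ⟨M, Filter.eventually_map.mpr hbd_le⟩
    obtain ⟨T, hT⟩ := bohlFilter_mem_iff.mp hev
    set T' : ℝ := max T 1 with hT'_def
    have hT'1 : (1:ℝ) ≤ T' := le_max_right T 1
    refine ⟨Real.exp ((M + |lam| + α) * T'), α, ?_, hα, ?_⟩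
    · apply Real.one_le_exp
      have := abs_nonneg lam
      nlinarith
    · intro s t h0 hst
      rw [integral_shift hD_cont lam h0 hst]
      rcases le_or_gt T' (t - s) with hbig | hsmall
      · have hpos : (0:ℝ) < t - s := lt_of_lt_of_le (by linarith) hbig
        have hst' : s < t := by linarith
        have havg := hT (s, t) h0 hst' (le_trans (le_max_left T 1) hbig)
        simp only [Set.mem_setOf_eq, bohlAvg] at havg
        have h1 : (t - s) * ((t - s)⁻¹ * ∫ τ in s..t, D τ) ≤ (t - s) * (lam - α) :=
          mul_le_mul_of_nonneg_left havg.le hpos.le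
        have h2 : (∫ τ in s..t, D τ) ≤ (t - s) * (lam - α) := by
          rwa [← mul_assoc, mul_inv_cancel₀ hpos.ne', one_mul] at h1
        have h3 : (∫ τ in s..t, D τ) - lam * (t - s) ≤ -α * (t - s) := by nlinarith
        calc Real.exp ((∫ τ in s..t, D τ) - lam * (t - s))
            ≤ Real.exp (-α * (t - s)) := Real.exp_le_exp.mpr h3
          _ ≤ Real.exp ((M + |lam| + α) * T') * Real.exp (-α * (t - s)) := by
              apply le_mul_of_one_le_left (Real.exp_pos _).le
              apply Real.one_le_exp
              have := abs_nonneg lam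
              nlinarith
      · have hts : 0 ≤ t - s := sub_nonneg.mpr hst
        have hIb : |∫ τ in s..t, D τ| ≤ M * (t - s) := by
          have := intervalIntegral.norm_integral_le_of_norm_le_const (C := M)
            (f := D) (a := s) (b := t) (fun x hx => by
              rw [Set.uIoc_of_le hst] at hx
              rw [Real.norm_eq_abs]
              exact hM x (h0.trans hx.1.le))
          rwa [Real.norm_eq_abs, abs_of_nonneg hts] at this
        have hIb2 := (abs_le.mp hIb).2
        have hlam1 : -(lam * (t - s)) ≤ |lam| * (t - s) := by
          have h := neg_abs_le lam
          nlinarith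
        rw [← Real.exp_add]
        apply Real.exp_le_exp.mpr
        have hαts : α * (t - s) ≤ α * T' := by nlinarith
        have hMts : M * (t - s) ≤ M * T' := by nlinarith
        have hlts : |lam| * (t - s) ≤ |lam| * T' := by nlinarith [abs_nonneg lam]
        nlinarith
  · rintro ⟨K, α, hK, hα, h⟩
    have hK0 : (0:ℝ) < K := lt_of_lt_of_le one_pos hK
    have hlogK : 0 ≤ Real.log K := Real.log_nonneg hK
    have key : ∀ s t : ℝ, 0 ≤ s → s < t →
        (∫ τ in s..t, D τ) ≤ (lam - α) * (t - s) + Real.log K := by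
      intro s t h0 hst
      have h2 : Real.exp (∫ τ in s..t, (D τ - lam)) ≤
          Real.exp (Real.log K + -α * (t - s)) := by
        rw [Real.exp_add, Real.exp_log hK0]
        exact h s t h0 hst.le
      have h3 := Real.exp_le_exp.mp h2
      rw [integral_shift hD_cont lam h0 hst.le] at h3
      linarith
    have hev : ∀ᶠ q in bohlFilter, bohlAvg D q ≤ lam - α / 2 := by
      apply bohlFilter_mem_iff.mpr
      refine ⟨max 1 (2 * Real.log K / α), ?_⟩
      rintro ⟨s, t⟩ h0 hst hTq
      simp only at h0 hst hTq ⊢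
      have hts : (0:ℝ) < t - s := lt_of_lt_of_le (by linarith [le_max_left (1:ℝ) (2 * Real.log K / α)]) hTq
      have hts1 : (1:ℝ) ≤ t - s := le_trans (le_max_left _ _) hTq
      have hlog : Real.log K ≤ (α / 2) * (t - s) := by
        have hd : 2 * Real.log K / α ≤ t - s := le_trans (le_max_right _ _) hTq
        rw [div_le_iff₀ hα] at hd
        nlinarith
      have hkey := key s t h0 hst
      have hIb : (∫ τ in s..t, D τ) ≤ (lam - α / 2) * (t - s) := by nlinarith
      simp only [Set.mem_setOf_eq, bohlAvg]
      have h1 : (t - s)⁻¹ * (∫ τ in s..t, D τ) ≤ (t - s)⁻¹ * ((lam - α / 2) * (t - s)) :=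
        mul_le_mul_of_nonneg_left hIb (by positivity)
      have h2 : (t - s)⁻¹ * ((lam - α / 2) * (t - s)) = lam - α / 2 := by
        field_simp
      linarith
    have hcb : Filter.IsCoboundedUnder (· ≤ ·) bohlFilter (bohlAvg D) := by
      apply Filter.IsBoundedUnder.isCoboundedUnder_le
      exact ⟨-M, Filter.eventually_map.mpr hbd_ge⟩
    have := Filter.limsup_le_of_le hcb hev
    calc bohlUpper D ≤ lam - α / 2 := this
      _ < lam := by linarith
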